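/- For n=1, the product measure P(σ_1,…,σ_L) = ∏_{i=1}^L μ_i^{-σ_i}(μ_i;q)_{σ_i}/(q;q)_{σ_i} satisfies the local ZF relation: for all α,β ∈ Z_{≥0}, g_α(μ)g_β(λ) = Σ_{0≤γ≤α} Φ_q(β|α+β-γ;λ,μ) g_γ(λ) g_{α+β-γ}(μ), where g_α(μ)=μ^{-α}(μ;q)_α/(q;q)_α and Φ_q is the n=1 weight function. -/

import Mathlib

open scoped BigOperators

noncomputable section

/-- The q-Pochhammer symbol `(z;q)_m = ∏_{j=0}^{m-1} (1 - z q^j)`. -/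
def qP (q z : ℝ) (m : ℕ) : ℝ := ∏ j ∈ Finset.range m, (1 - z * q ^ j)

/-- The q-binomial coefficient, zero outside `0 ≤ k ≤ m`. -/
def qBinom (q : ℝ) (m k : ℕ) : ℝ :=
  if k ≤ m then qP q q m / (qP q q k * qP q q (m - k)) else 0

/-- `g_α(μ) = μ^{-α}(μ;q)_α/(q;q)_α` for `n = 1`. -/
def g1 (q mu : ℝ) (a : ℕ) : ℝ := mu ^ (-(a : ℤ)) * qP q mu a / qP q q a

/-- The `n = 1` weight function
`Φ_q(γ|β;λ,μ) = (μ/λ)^γ (λ;q)_γ (μ/λ;q)_{β-γ}/(μ;q)_β · binom_q(β,γ)`. -/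
def Phi1 (q lam mu : ℝ) (γ β : ℕ) : ℝ :=
  (mu / lam) ^ γ * qP q lam γ * qP q (mu / lam) (β - γ) / qP q mu β *
    qBinom q β γ

lemma qP_zero (q z : ℝ) : qP q z 0 = 1 := by simp [qP]

lemma qP_succ (q z : ℝ) (m : ℕ) : qP q z (m+1) = qP q z m * (1 - z * q ^ m) :=
  Finset.prod_range_succ _ _

lemma qfac_ne (q : ℝ) (hq0 : 0 < q) (hq1 : q < 1) (j : ℕ) : (1 - q * q ^ j) ≠ 0 := by
  have h1 : q ^ j ≤ 1 := pow_le_one₀ hq0.le hq1.le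
  nlinarith

lemma qPq_pos (q : ℝ) (hq0 : 0 < q) (hq1 : q < 1) (m : ℕ) : 0 < qP q q m := by
  apply Finset.prod_pos
  intro j _
  have h1 : q ^ j ≤ 1 := pow_le_one₀ hq0.le hq1.le
  nlinarith

lemma qBinom_pascal (q : ℝ) (hq0 : 0 < q) (hq1 : q < 1) (n k : ℕ)
    (hk1 : 1 ≤ k) (hk2 : k ≤ n + 1) :
    qBinom q (n+1) k = qBinom q n k + q ^ (n+1-k) * qBinom q n (k-1) := by
  have hqq : ∀ m, qP q q m ≠ 0 := fun m => (qPq_pos q hq0 hq1 m).ne'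
  obtain ⟨m, rfl⟩ : ∃ m, k = m + 1 := ⟨k-1, (Nat.succ_pred_eq_of_pos hk1).symm⟩
  rcases Nat.lt_or_ge n (m+1) with h | h
  · have hm : n = m := by omega
    subst hm
    have h1 : ¬ (n + 1 ≤ n) := by omega
    simp only [qBinom, le_refl, if_true, if_neg h1, Nat.sub_self, qP_zero, mul_one,
      Nat.add_sub_cancel, Nat.add_sub_cancel_left, pow_zero]
    rw [div_self (hqq (n+1)), div_self (hqq n)]
    ring
  · have h1 : m + 1 ≤ n + 1 := by omega
    have h2 : m + 1 ≤ n := h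
    have h3 : m ≤ n := by omega
    simp only [qBinom, if_pos h1, if_pos h2, if_pos h3, Nat.add_sub_cancel]
    have e1 : n + 1 - (m+1) = n - m := by omega
    have e2 : n - m = (n - (m+1)) + 1 := by omega
    rw [e1, qP_succ q q n, qP_succ q q m, e2, qP_succ q q (n - (m+1))]
    have e3 : q ^ (n - (m + 1) + 1) = q * q ^ (n - (m+1)) := by
      rw [pow_succ]; ring
    have e4 : q ^ n = q * (q ^ m * q ^ (n - (m+1))) := by
      rw [← pow_add, ← pow_succ']
      congr 1
      omega
    rw [e3, e4]
    have hw := qfac_ne q hq0 hq1 (n - (m+1))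
    have hv := qfac_ne q hq0 hq1 m
    have hB := hqq m
    have hC := hqq (n - (m+1))
    rw [← mul_div_assoc]
    rw [div_add_div _ _ (by positivity) (by positivity)]
    rw [div_eq_div_iff (by positivity) (by positivity)]
    ring

lemma qBinom_self (q : ℝ) (hq0 : 0 < q) (hq1 : q < 1) (n : ℕ) : qBinom q n n = 1 := by
  simp only [qBinom, le_refl, if_true, Nat.sub_self, qP_zero, mul_one]
  exact div_self (qPq_pos q hq0 hq1 n).ne'

lemma qBinom_zero (q : ℝ) (hq0 : 0 < q) (hq1 : q < 1) (n : ℕ) : qBinom q n 0 = 1 := by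
  simp only [qBinom, Nat.zero_le, if_true, Nat.sub_zero, qP_zero, one_mul]
  exact div_self (qPq_pos q hq0 hq1 n).ne'

lemma qVandermonde (q a b : ℝ) (hq0 : 0 < q) (hq1 : q < 1) (n : ℕ) :
    qP q (a*b) n = ∑ k ∈ Finset.range (n+1),
      qBinom q n k * b ^ k * qP q a k * qP q b (n - k) := by
  induction n with
  | zero => simp [qP_zero, qBinom_zero q hq0 hq1]
  | succ n ih =>
    rw [qP_succ, ih, Finset.sum_mul]
    symm
    have step1 : ∀ k ∈ Finset.range (n+2),
        qBinom q (n+1) k * b ^ k * qP q a k * qP q b (n+1-k)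
          = qBinom q n k * b ^ k * qP q a k * qP q b (n+1-k)
            + (if k = 0 then 0 else
                q ^ (n+1-k) * qBinom q n (k-1) * b ^ k * qP q a k * qP q b (n+1-k)) := by
      intro k hk
      rcases Nat.eq_zero_or_pos k with rfl | hkpos
      · rw [if_pos rfl, qBinom_zero q hq0 hq1, qBinom_zero q hq0 hq1]
        ring
      · rw [if_neg (by omega)]
        rw [qBinom_pascal q hq0 hq1 n k hkpos (by simpa [Nat.lt_succ_iff] using Finset.mem_range.mp hk)]
        ring
    rw [Finset.sum_congr rfl step1, Finset.sum_add_distrib]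
    have hG : ∑ k ∈ Finset.range (n+2),
        qBinom q n k * b ^ k * qP q a k * qP q b (n+1-k)
        = ∑ k ∈ Finset.range (n+1),
            qBinom q n k * b ^ k * qP q a k * qP q b (n+1-k) := by
      rw [Finset.sum_range_succ]
      have : qBinom q n (n+1) = 0 := by simp [qBinom]
      simp [this]
    have hH : ∑ k ∈ Finset.range (n+2),
        (if k = 0 then 0 else
          q ^ (n+1-k) * qBinom q n (k-1) * b ^ k * qP q a k * qP q b (n+1-k))
        = ∑ k ∈ Finset.range (n+1),
            q ^ (n-k) * qBinom q n k * b ^ (k+1) * qP q a (k+1) * qP q b (n-k) := by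
      rw [Finset.sum_range_succ']
      norm_num
      apply Finset.sum_congr rfl
      intro k _
      simp only [Nat.succ_sub_succ]
    rw [hG, hH, ← Finset.sum_add_distrib]
    apply Finset.sum_congr rfl
    intro k hk
    have hkn : k ≤ n := by simpa [Nat.lt_succ_iff] using Finset.mem_range.mp hk
    have e1 : n + 1 - k = (n - k) + 1 := by omega
    rw [e1, qP_succ q b (n-k), qP_succ q a k]
    have hpow : q ^ (n-k) * q ^ k = q ^ n := by
      rw [← pow_add]; congr 1; omega
    linear_combination (-(a*b*(qBinom q n k * b ^ k * qP q a k * qP q b (n-k)))) * hpow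

lemma g1_eq (q mu : ℝ) (a : ℕ) : g1 q mu a = qP q mu a / (mu ^ a * qP q q a) := by
  unfold g1
  rw [zpow_neg, zpow_natCast]
  ring

/-- For `n = 1`, the product measure
`P(σ₁,…,σ_L) = ∏_i μ_i^{-σ_i}(μ_i;q)_{σ_i}/(q;q)_{σ_i} = ∏_i g_{σ_i}(μ_i)`
satisfies the local ZF relation: for all `α,β ∈ Z_{≥0}`,
`g_α(μ) g_β(λ) = ∑_{0≤γ≤α} Φ_q(β|α+β-γ;λ,μ) g_γ(λ) g_{α+β-γ}(μ)`. -/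
theorem zf_relation_n1 (q lam mu : ℝ) (hq0 : 0 < q) (hq1 : q < 1)
    (hlam : lam ≠ 0) (hmu : mu ≠ 0) (α β : ℕ)
    (hP : ∀ m, m ≤ α + β → qP q mu m ≠ 0) :
    g1 q mu α * g1 q lam β
      = ∑ γ ∈ Finset.range (α + 1),
          Phi1 q lam mu β (α + β - γ) * g1 q lam γ * g1 q mu (α + β - γ) := by
  have hqq : ∀ m, qP q q m ≠ 0 := fun m => (qPq_pos q hq0 hq1 m).ne'
  have hmul : lam * (mu / lam) = mu := by field_simp
  have hvdm := qVandermonde q lam (mu/lam) hq0 hq1 α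
  rw [hmul] at hvdm
  have lhs_eq : g1 q mu α * g1 q lam β
      = ∑ γ ∈ Finset.range (α + 1),
          (g1 q lam β / (mu ^ α * qP q q α)) *
            (qBinom q α γ * (mu/lam) ^ γ * qP q lam γ * qP q (mu/lam) (α - γ)) := by
    rw [g1_eq q mu α, hvdm, Finset.sum_div, Finset.sum_mul]
    apply Finset.sum_congr rfl
    intro k _
    ring
  rw [lhs_eq]
  apply Finset.sum_congr rfl
  intro γ hγ
  have hγα : γ ≤ α := by simpa [Nat.lt_succ_iff] using Finset.mem_range.mp hγ
  obtain ⟨d, rfl⟩ : ∃ d, α = γ + d := ⟨α - γ, by omega⟩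
  have e1 : γ + d + β - γ = β + d := by omega
  have e2 : γ + d - γ = d := by omega
  rw [e1, e2]
  have hPβd : qP q mu (β + d) ≠ 0 := hP (β + d) (by omega)
  rw [g1_eq, g1_eq, g1_eq]
  unfold Phi1 qBinom
  rw [if_pos (by omega : γ ≤ γ + d), if_pos (by omega : β ≤ β + d)]
  have e3 : γ + d - γ = d := by omega
  have e4 : β + d - β = d := by omega
  rw [e3, e4]
  have h1 := hqq γ
  have h2 := hqq d
  have h3 := hqq β
  have h4 := hqq (γ + d)
  have h5 := hqq (β + d)
  field_simp
  have key : ∀ n : ℕ, lam ^ n * lam⁻¹ ^ n = 1 := fun n => by rw [← mul_pow, mul_inv_cancel₀ hlam, one_pow]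
  linear_combination (qP q lam β * mu ^ γ * mu ^ β * mu ^ d * qP q lam γ * qP q (mu / lam) d) * (key γ - key β)
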